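/- The subgroup of GL₂(ℤ) generated by the four matrices −I₂, r₋₁, r₀, r₁ is all of GL₂(ℤ); equivalently, every A ∈ GL₂(ℤ) can be written as ± a finite product of the matrices r₋₁, r₀, r₁. (Hence the Weyl group of F, generated by the images of r₋₁, r₀, r₁, is all of PGL₂(ℤ).) -/

import Mathlib

open Matrix

/-- The simple reflection `r₋₁` as an element of `GL₂(ℤ)`. -/
def um : GL (Fin 2) ℤ := ⟨!![0, 1; 1, 0], !![0, 1; 1, 0], by decide, by decide⟩

/-- The simple reflection `r₀` as an element of `GL₂(ℤ)`. -/
def u0 : GL (Fin 2) ℤ := ⟨!![-1, 1; 0, 1], !![-1, 1; 0, 1], by decide, by decide⟩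

/-- The simple reflection `r₁` as an element of `GL₂(ℤ)`. -/
def u1 : GL (Fin 2) ℤ := ⟨!![1, 0; 0, -1], !![1, 0; 0, -1], by decide, by decide⟩

def Sg : GL (Fin 2) ℤ := ⟨!![0, -1; 1, 0], !![0, 1; -1, 0], by decide, by decide⟩

def Tz (b : ℤ) : GL (Fin 2) ℤ :=
  ⟨!![1, b; 0, 1], !![1, -b; 0, 1],
    by ext i j; fin_cases i <;> fin_cases j <;>
      simp [Matrix.mul_apply, Fin.sum_univ_two],
    by ext i j; fin_cases i <;> fin_cases j <;>
      simp [Matrix.mul_apply, Fin.sum_univ_two]⟩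

lemma GL_ext {A B : GL (Fin 2) ℤ} (h : ∀ i j, A.val i j = B.val i j) : A = B :=
  Units.ext (by ext i j; exact h i j)

abbrev Hgp : Subgroup (GL (Fin 2) ℤ) := Subgroup.closure {(-1 : GL (Fin 2) ℤ), um, u0, u1}

lemma hneg : (-1 : GL (Fin 2) ℤ) ∈ Hgp := Subgroup.subset_closure (by simp)
lemma hum : um ∈ Hgp := Subgroup.subset_closure (by simp)
lemma hu0 : u0 ∈ Hgp := Subgroup.subset_closure (by simp)
lemma hu1 : u1 ∈ Hgp := Subgroup.subset_closure (by simp)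

lemma Sg_eq : Sg = um * u1 := Units.ext (by decide)

lemma hSg : Sg ∈ Hgp := Sg_eq ▸ Hgp.mul_mem hum hu1

lemma Tz_one : Tz 1 = (-1) * (u0 * u1) := Units.ext (by decide)

lemma Tz_add (a b : ℤ) : Tz (a + b) = Tz a * Tz b := by
  apply GL_ext
  intro i j
  fin_cases i <;> fin_cases j <;>
    simp [Tz, Units.val_mul, Matrix.mul_apply, Fin.sum_univ_two] <;> ring

lemma hT1 : Tz 1 ∈ Hgp := Tz_one ▸ Hgp.mul_mem hneg (Hgp.mul_mem hu0 hu1)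

lemma hTz (b : ℤ) : Tz b ∈ Hgp := by
  induction b using Int.induction_on with
  | zero =>
    have h0 : Tz 0 = 1 := by
      apply GL_ext; intro i j; fin_cases i <;> fin_cases j <;> simp [Tz]
    rw [h0]; exact Hgp.one_mem
  | succ n ih => rw [Tz_add]; exact Hgp.mul_mem ih hT1
  | pred n ih =>
    have h : Tz (-(n : ℤ) - 1) * Tz 1 = Tz (-(n : ℤ)) := by rw [← Tz_add]; ring_nf
    have e : Tz (-(n : ℤ) - 1) = Tz (-(n : ℤ)) * (Tz 1)⁻¹ := by rw [← h]; group
    rw [e]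
    exact Hgp.mul_mem ih (Hgp.inv_mem hT1)

lemma emod_natAbs_lt (a : ℤ) {c : ℤ} (hc : c ≠ 0) : (a % c).natAbs < c.natAbs := by
  have h1 : 0 ≤ a % c := Int.emod_nonneg a hc
  rcases lt_or_gt_of_ne hc with h | h
  · have h2 : a % c = a % (-c) := by rw [Int.emod_neg]
    have h3 : a % (-c) < -c := Int.emod_lt_of_pos a (by omega)
    omega
  · have h3 : a % c < c := Int.emod_lt_of_pos a h
    omega

lemma mem_aux : ∀ (n : ℕ) (A : GL (Fin 2) ℤ), (A.val 1 0).natAbs = n → A ∈ Hgp := by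
  intro n
  induction n using Nat.strong_induction_on with
  | _ n ih =>
  intro A hn
  by_cases hc : A.val 1 0 = 0
  · -- c = 0
    have hdet : IsUnit A.val.det := (Matrix.isUnit_iff_isUnit_det _).mp A.isUnit
    rw [Matrix.det_fin_two, hc, mul_zero, sub_zero] at hdet
    rcases Int.isUnit_iff.mp hdet with h | h
    · rcases Int.eq_one_or_neg_one_of_mul_eq_one' h with ⟨ha, hd⟩ | ⟨ha, hd⟩
      · have : A = Tz (A.val 0 1) := by
          apply GL_ext; intro i j; fin_cases i <;> fin_cases j <;>
            simp [Tz, ha, hd, hc]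
        rw [this]; exact hTz _
      · have : A = (-1) * Tz (-(A.val 0 1)) := by
          apply GL_ext; intro i j; fin_cases i <;> fin_cases j <;>
            simp [Tz, ha, hd, hc, Units.val_mul]
        rw [this]; exact Hgp.mul_mem hneg (hTz _)
    · rcases Int.eq_one_or_neg_one_of_mul_eq_neg_one' h with ⟨ha, hd⟩ | ⟨ha, hd⟩
      · have : A = Tz (-(A.val 0 1)) * u1 := by
          apply GL_ext; intro i j; fin_cases i <;> fin_cases j <;>
            simp [Tz, u1, ha, hd, hc, Units.val_mul, Matrix.mul_apply, Fin.sum_univ_two]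
        rw [this]; exact Hgp.mul_mem (hTz _) hu1
      · have : A = (-1) * (Tz (A.val 0 1) * u1) := by
          apply GL_ext; intro i j; fin_cases i <;> fin_cases j <;>
            simp [Tz, u1, ha, hd, hc, Units.val_mul, Matrix.mul_apply, Fin.sum_univ_two]
        rw [this]; exact Hgp.mul_mem hneg (Hgp.mul_mem (hTz _) hu1)
  · -- c ≠ 0 : Euclidean step
    set B := Sg * (Tz (-(A.val 0 0 / A.val 1 0)) * A) with hB
    have hstep : B.val 1 0 = A.val 0 0 - A.val 0 0 / A.val 1 0 * A.val 1 0 := by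
      simp [hB, Sg, Tz, Units.val_mul, Matrix.mul_apply, Fin.sum_univ_two,
        Matrix.vecMul, dotProduct]
      ring
    have hlt : (B.val 1 0).natAbs < n := by
      rw [hstep, show A.val 0 0 - A.val 0 0 / A.val 1 0 * A.val 1 0
          = A.val 0 0 % A.val 1 0 from by rw [Int.emod_def]; ring]
      subst hn
      exact emod_natAbs_lt _ hc
    have hBmem : B ∈ Hgp := ih _ hlt B rfl
    have hA : A = (Tz (-(A.val 0 0 / A.val 1 0)))⁻¹ * (Sg⁻¹ * B) := by
      rw [hB]; group
    rw [hA]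
    exact Hgp.mul_mem (Hgp.inv_mem (hTz _)) (Hgp.mul_mem (Hgp.inv_mem hSg) hBmem)

lemma mem_Hgp (A : GL (Fin 2) ℤ) : A ∈ Hgp := mem_aux _ A rfl

lemma self_inv : ∀ x ∈ ({um, u0, u1} : Set (GL (Fin 2) ℤ)), x⁻¹ = x := by
  rintro x (rfl | rfl | rfl) <;> exact Units.ext (by decide)

lemma rev_prod : ∀ l : List (GL (Fin 2) ℤ),
    (∀ x ∈ l, x ∈ ({um, u0, u1} : Set (GL (Fin 2) ℤ))) → (l.prod)⁻¹ = l.reverse.prod := by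
  intro l
  induction l with
  | nil => simp
  | cons x l ih =>
    intro h
    have hx := h x (by simp)
    have hl := ih (fun y hy => h y (by simp [hy]))
    simp [List.prod_cons, _root_.mul_inv_rev, hl, self_inv x hx]

theorem stmt_7 :
    Subgroup.closure {(-1 : GL (Fin 2) ℤ), um, u0, u1} = ⊤ ∧
    (∀ A : GL (Fin 2) ℤ, ∃ l : List (GL (Fin 2) ℤ),
      (∀ x ∈ l, x ∈ ({um, u0, u1} : Set (GL (Fin 2) ℤ))) ∧
      (A = l.prod ∨ A = -l.prod)) := by
  constructor
  · exact (Subgroup.eq_top_iff' _).mpr mem_Hgp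
  · intro A
    refine Subgroup.closure_induction
      (p := fun g _ => ∃ l : List (GL (Fin 2) ℤ),
        (∀ x ∈ l, x ∈ ({um, u0, u1} : Set (GL (Fin 2) ℤ))) ∧
        (g = l.prod ∨ g = -l.prod)) ?_ ?_ ?_ ?_ (mem_Hgp A)
    · rintro x (rfl | hx)
      · exact ⟨[], by simp, Or.inr (by simp)⟩
      · exact ⟨[x], by simpa using hx, Or.inl (by simp)⟩
    · exact ⟨[], by simp, Or.inl (by simp)⟩
    · rintro x y _ _ ⟨l1, h1, e1⟩ ⟨l2, h2, e2⟩
      refine ⟨l1 ++ l2, ?_, ?_⟩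
      · intro z hz
        rcases List.mem_append.mp hz with h | h
        · exact h1 z h
        · exact h2 z h
      · rcases e1 with rfl | rfl <;> rcases e2 with rfl | rfl <;>
          simp [List.prod_append, mul_neg, neg_mul, neg_neg]
    · rintro x _ ⟨l, h, e⟩
      refine ⟨l.reverse, fun z hz => h z (List.mem_reverse.mp hz), ?_⟩
      rcases e with rfl | rfl
      · exact Or.inl (rev_prod l h)
      · refine Or.inr ?_
        rw [inv_neg, rev_prod l h]
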